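/- The function δ on G ∗ F(X) is symmetric, and for all u,v,w,x ∈ G ∗ F(X) one has δ(u·v, w·x) ≤ δ(u,w) + δ(v,x). Consequently δ satisfies the triangle inequality and is two-sided invariant: δ(g·u·h, g·v·h) = δ(u,v) for all g,h,u,v ∈ G ∗ F(X). -/

import Mathlib

open Monoid

/-- A (real-valued) metric on a type. -/
def IsMetricD {α : Type*} (d : α → α → ℝ) : Prop :=
  (∀ x y, d x y = 0 ↔ x = y) ∧ (∀ x y, d x y = d y x) ∧
  (∀ x y z, d x z ≤ d x y + d y z)

/-- Two-sided invariance of a distance function on a group. -/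
def IsBiInvariant {G : Type*} [Group G] (d : G → G → ℝ) : Prop :=
  ∀ g h x y : G, d (g * x * h) (g * y * h) = d x y

/-- The free product `G ∗ F(X)`. -/
abbrev FP (G X : Type*) [Group G] := Monoid.Coprod G (FreeGroup X)

/-- The alphabet `S = G ⊔ X ⊔ X⁻¹`. -/
abbrev Alphabet (G X : Type*) := G ⊕ (X ⊕ X)

/-- Canonical image of a letter in the free product. -/
def toFP {G X : Type*} [Group G] : Alphabet G X → FP G X
  | Sum.inl g => Coprod.inl g
  | Sum.inr (Sum.inl x) => Coprod.inr (FreeGroup.of x)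
  | Sum.inr (Sum.inr x) => (Coprod.inr (FreeGroup.of x) : FP G X)⁻¹

/-- For a word `w` over `S`, `wordProd w` is `w'`, the product of the images of its letters. -/
def wordProd {G X : Type*} [Group G] (w : List (Alphabet G X)) : FP G X :=
  (w.map toFP).prod

/-- `ρ(v,w) = d(v₁,w₁) + … + d(vₙ,wₙ)`. -/
def rho {α : Type*} (d : α → α → ℝ) (v w : List α) : ℝ :=
  (List.zipWith d v w).sum

/-- The Graev pre-metric `δ` on the free product. -/
noncomputable def graevDelta {G X : Type*} [Group G]
    (d : Alphabet G X → Alphabet G X → ℝ) (u v : FP G X) : ℝ :=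
  sInf { r | ∃ w₁ w₂ : List (Alphabet G X), w₁.length = w₂.length ∧
    wordProd w₁ = u ∧ wordProd w₂ = v ∧ r = rho d w₁ w₂ }

/-- The extension `d` of `d'` from `G ⊔ X` to `S = G ⊔ X ⊔ X⁻¹`. -/
noncomputable def extD {G X : Type*} [Group G] (d' : (G ⊕ X) → (G ⊕ X) → ℝ) :
    Alphabet G X → Alphabet G X → ℝ
  | Sum.inl g, Sum.inl h => d' (Sum.inl g) (Sum.inl h)
  | Sum.inl g, Sum.inr (Sum.inl x) => d' (Sum.inl g) (Sum.inr x)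
  | Sum.inr (Sum.inl x), Sum.inl g => d' (Sum.inr x) (Sum.inl g)
  | Sum.inr (Sum.inl x), Sum.inr (Sum.inl y) => d' (Sum.inr x) (Sum.inr y)
  | Sum.inl g, Sum.inr (Sum.inr x) => d' (Sum.inl g⁻¹) (Sum.inr x)
  | Sum.inr (Sum.inr x), Sum.inl g => d' (Sum.inr x) (Sum.inl g⁻¹)
  | Sum.inr (Sum.inr x), Sum.inr (Sum.inr y) => d' (Sum.inr x) (Sum.inr y)
  | Sum.inr (Sum.inl x), Sum.inr (Sum.inr y) =>
      sInf { r | ∃ c : G, r = d' (Sum.inr x) (Sum.inl c) + d' (Sum.inl c⁻¹) (Sum.inr y) }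
  | Sum.inr (Sum.inr x), Sum.inr (Sum.inl y) =>
      sInf { r | ∃ c : G, r = d' (Sum.inr y) (Sum.inl c) + d' (Sum.inl c⁻¹) (Sum.inr x) }

/-- Formal inverse of a letter of `S`. -/
def formalInv {G X : Type*} [Group G] : Alphabet G X → Alphabet G X
  | Sum.inl g => Sum.inl g⁻¹
  | Sum.inr (Sum.inl x) => Sum.inr (Sum.inr x)
  | Sum.inr (Sum.inr x) => Sum.inr (Sum.inl x)

/-- Admissible adjacent pair in an irreducible word. -/
def okPair {G X : Type*} [Group G] : Alphabet G X → Alphabet G X → Prop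
  | Sum.inl _, Sum.inl _ => False
  | Sum.inr x, Sum.inr y => Sum.inr y ≠ formalInv (Sum.inr x : Alphabet G X)
  | _, _ => True

/-- A word over `S` is irreducible if no two adjacent letters lie in `G`
and no two adjacent letters of `X ⊔ X⁻¹` are mutually inverse. -/
def IsIrreducibleWord {G X : Type*} [Group G] (w : List (Alphabet G X)) : Prop :=
  List.Chain' okPair w

/-- A finitely generated metric on a group, with generating set `A`. -/
def IsFinGenMetric {G : Type*} [Group G] (d : G → G → ℝ) (A : Set G) : Prop :=
  A.Finite ∧ (1 : G) ∈ A ∧ (∀ a ∈ A, a⁻¹ ∈ A) ∧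
  ∀ a b : G, IsLeast { r | ∃ l m : List G, l.length = m.length ∧
    (∀ x ∈ l, x ∈ A) ∧ (∀ y ∈ m, y ∈ A) ∧ l.prod = a ∧ m.prod = b ∧
    r = (List.zipWith d l m).sum } (d a b)

section GraevAux

variable {G X : Type*} [Group G]

theorem wordProd_append (a b : List (Alphabet G X)) :
    wordProd (a ++ b) = wordProd a * wordProd b := by
  simp [wordProd]

theorem wordProd_replicate_one (k : ℕ) :
    wordProd (List.replicate k (Sum.inl (1 : G) : Alphabet G X)) = 1 := by
  simp [wordProd, toFP, List.prod_replicate]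

theorem exists_word (u : FP G X) : ∃ w : List (Alphabet G X), wordProd w = u := by
  induction u using Coprod.induction_on with
  | inl g => exact ⟨[Sum.inl g], by simp [wordProd, toFP]⟩
  | inr f =>
    induction f using FreeGroup.induction_on with
    | C1 => exact ⟨[], by simp [wordProd]⟩
    | of x => exact ⟨[Sum.inr (Sum.inl x)], by simp [wordProd, toFP]⟩
    | inv_of x _ => exact ⟨[Sum.inr (Sum.inr x)], by simp [wordProd, toFP]⟩
    | mul a b ha hb =>
      obtain ⟨w1, h1⟩ := ha; obtain ⟨w2, h2⟩ := hb
      exact ⟨w1 ++ w2, by rw [wordProd_append, h1, h2, map_mul]⟩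
  | mul a b ha hb =>
    obtain ⟨w1, h1⟩ := ha; obtain ⟨w2, h2⟩ := hb
    exact ⟨w1 ++ w2, by rw [wordProd_append, h1, h2]⟩

theorem dprime_nonneg {α : Type*} {d : α → α → ℝ} (h : IsMetricD d) (a b : α) :
    0 ≤ d a b := by
  have h1 := h.2.2 a b a
  have h2 := (h.1 a a).mpr rfl
  have h3 := h.2.1 a b
  linarith

theorem extD_nonneg {d' : (G ⊕ X) → (G ⊕ X) → ℝ} (h' : IsMetricD d') :
    ∀ a b : Alphabet G X, 0 ≤ extD d' a b := by
  have hnn := dprime_nonneg h'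
  intro a b
  rcases a with g | x | x <;> rcases b with h | y | y <;>
      simp only [extD] <;> try exact hnn _ _
  · refine Real.sInf_nonneg ?_
    rintro r ⟨c, rfl⟩
    have h1 := hnn (Sum.inr x) (Sum.inl c)
    have h2 := hnn (Sum.inl c⁻¹) (Sum.inr y)
    linarith
  · refine Real.sInf_nonneg ?_
    rintro r ⟨c, rfl⟩
    have h1 := hnn (Sum.inr y) (Sum.inl c)
    have h2 := hnn (Sum.inl c⁻¹) (Sum.inr x)
    linarith

theorem extD_symm {d' : (G ⊕ X) → (G ⊕ X) → ℝ} (h' : IsMetricD d') :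
    ∀ a b : Alphabet G X, extD d' a b = extD d' b a := by
  intro a b
  rcases a with g | x | x <;> rcases b with h | y | y <;> simp only [extD] <;>
    first
      | rfl
      | exact h'.2.1 _ _

theorem extD_diag {d' : (G ⊕ X) → (G ⊕ X) → ℝ} (h' : IsMetricD d') :
    ∀ a : Alphabet G X, extD d' a a = 0 := by
  intro a
  rcases a with g | x | x <;> simp only [extD] <;> exact (h'.1 _ _).mpr rfl

theorem rho_nonneg {α : Type*} {d : α → α → ℝ} (hd : ∀ a b, 0 ≤ d a b) :
    ∀ v w : List α, 0 ≤ rho d v w := by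
  intro v
  induction v with
  | nil => intro w; simp [rho]
  | cons a v ih =>
    intro w
    cases w with
    | nil => simp [rho]
    | cons b w =>
      have := ih w
      have := hd a b
      have h3 : rho d (a :: v) (b :: w) = d a b + rho d v w := by
        simp [rho]
      rw [h3]
      linarith

theorem rho_diag {α : Type*} {d : α → α → ℝ} (hd : ∀ a, d a a = 0) :
    ∀ w : List α, rho d w w = 0 := by
  intro w
  induction w with
  | nil => simp [rho]
  | cons a w ih => simp [rho, hd a] at *; exact ih

theorem rho_comm {α : Type*} {d : α → α → ℝ} (hd : ∀ a b, d a b = d b a) :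
    ∀ v w : List α, rho d v w = rho d w v := by
  intro v
  induction v with
  | nil => intro w; cases w <;> simp [rho]
  | cons a v ih =>
    intro w
    cases w with
    | nil => simp [rho]
    | cons b w => simp [rho, hd a b] at *; rw [ih w]

theorem rho_append {α : Type*} (d : α → α → ℝ) {a b : List α} (c e : List α)
    (h : a.length = b.length) :
    rho d (a ++ c) (b ++ e) = rho d a b + rho d c e := by
  unfold rho
  rw [List.zipWith_append h, List.sum_append]

end GraevAux

/-- `δ` is symmetric and satisfies
`δ(u·v, w·x) ≤ δ(u,w) + δ(v,x)`; consequently it satisfies the triangle inequality and is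
two-sided invariant. -/
theorem graevDelta_symm_subadditive {G X : Type*} [Group G]
    (dG : G → G → ℝ) (dX : X → X → ℝ) (d' : (G ⊕ X) → (G ⊕ X) → ℝ)
    (hG : IsMetricD dG) (hGinv : IsBiInvariant dG) (hX : IsMetricD dX)
    (h' : IsMetricD d')
    (hextG : ∀ g h : G, d' (Sum.inl g) (Sum.inl h) = dG g h)
    (hextX : ∀ x y : X, d' (Sum.inr x) (Sum.inr y) = dX x y)
    (hpos : ∀ x : X, ∃ ε > (0 : ℝ), ∀ g : G, ε ≤ d' (Sum.inl g) (Sum.inr x)) :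
    (∀ u v : FP G X, graevDelta (extD d') u v = graevDelta (extD d') v u) ∧
    (∀ u v w x : FP G X,
      graevDelta (extD d') (u * v) (w * x) ≤
        graevDelta (extD d') u w + graevDelta (extD d') v x) ∧
    (∀ u v w : FP G X,
      graevDelta (extD d') u w ≤ graevDelta (extD d') u v + graevDelta (extD d') v w) ∧
    (∀ g h u v : FP G X,
      graevDelta (extD d') (g * u * h) (g * v * h) = graevDelta (extD d') u v) := by
  classical
  set d : Alphabet G X → Alphabet G X → ℝ := extD d' with hd
  have hdnn : ∀ a b, 0 ≤ d a b := extD_nonneg h'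
  have hdsymm : ∀ a b, d a b = d b a := extD_symm h'
  have hddiag : ∀ a, d a a = 0 := extD_diag h'
  set S : FP G X → FP G X → Set ℝ := fun u v =>
    { r | ∃ w₁ w₂ : List (Alphabet G X), w₁.length = w₂.length ∧
      wordProd w₁ = u ∧ wordProd w₂ = v ∧ r = rho d w₁ w₂ } with hS
  have hSdelta : ∀ u v, graevDelta d u v = sInf (S u v) := fun u v => rfl
  have hSnn : ∀ u v, ∀ r ∈ S u v, 0 ≤ r := by
    rintro u v r ⟨w₁, w₂, -, -, -, rfl⟩
    exact rho_nonneg hdnn _ _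
  have hbdd : ∀ u v, BddBelow (S u v) := fun u v => ⟨0, fun r hr => hSnn u v r hr⟩
  have hne : ∀ u v, (S u v).Nonempty := by
    intro u v
    obtain ⟨w₁, h1⟩ := exists_word u
    obtain ⟨w₂, h2⟩ := exists_word v
    set n := max w₁.length w₂.length with hn
    refine ⟨_, w₁ ++ List.replicate (n - w₁.length) (Sum.inl 1),
      w₂ ++ List.replicate (n - w₂.length) (Sum.inl 1), ?_, ?_, ?_, rfl⟩
    · simp only [List.length_append, List.length_replicate]
      have := le_max_left w₁.length w₂.length
      have := le_max_right w₁.length w₂.length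
      omega
    · rw [wordProd_append, h1, wordProd_replicate_one, mul_one]
    · rw [wordProd_append, h2, wordProd_replicate_one, mul_one]
  have hnonneg : ∀ u v, 0 ≤ graevDelta d u v := fun u v =>
    Real.sInf_nonneg (hSnn u v)
  have hself : ∀ u, graevDelta d u u = 0 := by
    intro u
    obtain ⟨w, hw⟩ := exists_word u
    have hmem : (0 : ℝ) ∈ S u u := ⟨w, w, rfl, hw, hw, (rho_diag hddiag w).symm⟩
    exact le_antisymm (csInf_le (hbdd u u) hmem) (hnonneg u u)
  have hsymm : ∀ u v, graevDelta d u v = graevDelta d v u := by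
    intro u v
    have hset : S u v = S v u := by
      ext r
      constructor <;> rintro ⟨w₁, w₂, hl, h1, h2, rfl⟩ <;>
        exact ⟨w₂, w₁, hl.symm, h2, h1, rho_comm hdsymm _ _⟩
    rw [hSdelta, hSdelta, hset]
  have hsub : ∀ u v w x, graevDelta d (u * v) (w * x) ≤
      graevDelta d u w + graevDelta d v x := by
    intro u v w x
    have key : ∀ a ∈ S u w, ∀ b ∈ S v x, graevDelta d (u * v) (w * x) ≤ a + b := by
      rintro a ⟨w₁, w₂, hl, h1, h2, rfl⟩ b ⟨w₃, w₄, hl', h3, h4, rfl⟩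
      have hmem : rho d w₁ w₂ + rho d w₃ w₄ ∈ S (u * v) (w * x) :=
        ⟨w₁ ++ w₃, w₂ ++ w₄, by simp [hl, hl'],
          by rw [wordProd_append, h1, h3], by rw [wordProd_append, h2, h4],
          (rho_append d _ _ hl).symm⟩
      exact csInf_le (hbdd _ _) hmem
    have h1 : ∀ a ∈ S u w, graevDelta d (u * v) (w * x) - a ≤ graevDelta d v x :=
      fun a ha => le_csInf (hne v x) (fun b hb => by linarith [key a ha b hb])
    have h2 : graevDelta d (u * v) (w * x) - graevDelta d v x ≤ graevDelta d u w :=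
      le_csInf (hne u w) (fun a ha => by linarith [h1 a ha])
    linarith
  have le1 : ∀ g h u v : FP G X,
      graevDelta d (g * u * h) (g * v * h) ≤ graevDelta d u v := by
    intro g h u v
    have t1 := hsub (g * u) h (g * v) h
    have t2 := hsub g u g v
    rw [hself h] at t1
    rw [hself g] at t2
    linarith
  have hinv : ∀ g h u v : FP G X,
      graevDelta d (g * u * h) (g * v * h) = graevDelta d u v := by
    intro g h u v
    refine le_antisymm (le1 g h u v) ?_
    have := le1 g⁻¹ h⁻¹ (g * u * h) (g * v * h)
    have e1 : g⁻¹ * (g * u * h) * h⁻¹ = u := by group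
    have e2 : g⁻¹ * (g * v * h) * h⁻¹ = v := by group
    rwa [e1, e2] at this
  have htri : ∀ u v w, graevDelta d u w ≤ graevDelta d u v + graevDelta d v w := by
    intro u v w
    have h2 : graevDelta d 1 (v⁻¹ * w) = graevDelta d v w := by
      have := hinv v 1 1 (v⁻¹ * w)
      have e1 : v * 1 * 1 = v := by group
      have e2 : v * (v⁻¹ * w) * 1 = w := by group
      rw [e1, e2] at this
      exact this.symm
    have h1 := hsub u 1 v (v⁻¹ * w)
    have e3 : u * 1 = u := mul_one u
    have e4 : v * (v⁻¹ * w) = w := by group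
    rw [e3, e4, h2] at h1
    exact h1
  exact ⟨hsymm, hsub, htri, hinv⟩
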